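/- Over F_2, for a vector space W of dimension r, the filtration quotients of the Frobenius filtration on the symmetric algebra are given by f_t S*(W)/f_{t-1} S*(W) ≅ Λ^t(W) ⊗ S*(W), where S*(W) acts on the quotient through the Frobenius; moreover there is an isomorphism of S*(W)-modules (via Φ) ⊕_{t≥0} f_t S*(W)/f_{t-1} S*(W) ≅ S*(W). -/

import Mathlib

open MvPolynomial

/-- The Frobenius filtration `f_t S^*(W)`: the span of products `m · g²` with `m` homogeneous
of degree at most `t`. -/
noncomputable def frobFilt (σ : Type) (t : ℕ) :
    Submodule (ZMod 2) (MvPolynomial σ (ZMod 2)) :=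
  Submodule.span (ZMod 2) {p | ∃ u ≤ t, ∃ m g : MvPolynomial σ (ZMod 2),
    m.IsHomogeneous u ∧ p = m * g ^ 2}

/-- The predecessor filtration stage, with `f_{-1} = 0`. -/
noncomputable def frobFiltPred (σ : Type) : ℕ → Submodule (ZMod 2) (MvPolynomial σ (ZMod 2))
  | 0 => ⊥
  | (t + 1) => frobFilt σ t

section Aux

variable (σ : Type) [DecidableEq σ]

noncomputable def dOdd (d : σ →₀ ℕ) : Finset σ := d.support.filter (fun s => d s % 2 = 1)

noncomputable def dHalf (d : σ →₀ ℕ) : σ →₀ ℕ := d.mapRange (· / 2) (Nat.zero_div 2)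

noncomputable def indT (T : Finset σ) : σ →₀ ℕ := ∑ s ∈ T, Finsupp.single s 1

lemma indT_apply (T : Finset σ) (s : σ) : indT σ T s = if s ∈ T then 1 else 0 := by
  classical
  simp [indT, Finsupp.finset_sum_apply, Finsupp.single_apply]

lemma dHalf_apply (d : σ →₀ ℕ) (s : σ) : dHalf σ d s = d s / 2 := rfl

lemma mem_dOdd (d : σ →₀ ℕ) (s : σ) : s ∈ dOdd σ d ↔ d s % 2 = 1 := by
  simp only [dOdd, Finset.mem_filter, Finsupp.mem_support_iff]
  constructor
  · exact fun h => h.2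
  · intro h; exact ⟨by omega, h⟩

noncomputable def dEquiv : (σ →₀ ℕ) ≃ Finset σ × (σ →₀ ℕ) where
  toFun d := (dOdd σ d, dHalf σ d)
  invFun p := indT σ p.1 + p.2.mapRange (fun n => 2 * n) rfl
  left_inv d := by
    ext s
    rw [Finsupp.add_apply, indT_apply, Finsupp.mapRange_apply, dHalf_apply]
    by_cases hs : d s % 2 = 1
    · rw [if_pos ((mem_dOdd σ d s).mpr hs)]; omega
    · rw [if_neg (fun hm => hs ((mem_dOdd σ d s).mp hm))]; omega
  right_inv p := by
    obtain ⟨T, h⟩ := p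
    have key : ∀ s, ((indT σ T + h.mapRange (fun n => 2 * n) rfl : σ →₀ ℕ)) s
        = 2 * h s + (if s ∈ T then 1 else 0) := by
      intro s
      rw [Finsupp.add_apply, indT_apply, Finsupp.mapRange_apply]
      omega
    refine Prod.ext ?_ ?_
    · ext s
      rw [mem_dOdd, key s]
      by_cases hs : s ∈ T
      · simp only [hs, if_true, iff_true]; omega
      · simp only [hs, if_false, iff_false]; omega
    · ext s
      rw [dHalf_apply, key s]
      by_cases hs : s ∈ T <;> simp only [hs, if_true, if_false] <;> omega

lemma dEquiv_symm_apply (T : Finset σ) (h : σ →₀ ℕ) (s : σ) :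
    (dEquiv σ).symm (T, h) s = 2 * h s + (if s ∈ T then 1 else 0) := by
  show ((indT σ T + h.mapRange (fun n => 2 * n) rfl : σ →₀ ℕ)) s = _
  rw [Finsupp.add_apply, indT_apply, Finsupp.mapRange_apply]; omega

noncomputable def eAux : MvPolynomial σ (ZMod 2) ≃ₗ[ZMod 2] (Finset σ →₀ MvPolynomial σ (ZMod 2)) :=
  (AddMonoidAlgebra.coeffLinearEquiv (ZMod 2)).trans ((Finsupp.domLCongr (dEquiv σ)).trans
    ((Finsupp.finsuppProdLEquiv (ZMod 2)).trans
      (Finsupp.mapRange.linearEquiv (AddMonoidAlgebra.coeffLinearEquiv (ZMod 2)).symm)))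

lemma curry_single {α β M : Type*} [AddCommMonoid M] (a : α) (b : β) (m : M) :
    Finsupp.curry (Finsupp.single (a, b) m) = Finsupp.single a (Finsupp.single b m) := by
  exact Finsupp.curry_single (a, b) m

lemma prodLEquiv_single {α β M : Type*} [AddCommMonoid M] [Module (ZMod 2) M]
    (a : α) (b : β) (m : M) :
    Finsupp.finsuppProdLEquiv (ZMod 2) (Finsupp.single (a, b) m)
      = Finsupp.single a (Finsupp.single b m) := by
  show Finsupp.curry _ = _
  exact curry_single a b m

lemma eAux_monomial (d : σ →₀ ℕ) (c : ZMod 2) :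
    eAux σ (monomial d c)
      = Finsupp.single (dOdd σ d) (monomial (dHalf σ d) c) := by
  have h1 : eAux σ (monomial d c)
      = Finsupp.mapRange.linearEquiv (AddMonoidAlgebra.coeffLinearEquiv (ZMod 2)).symm
        (Finsupp.finsuppProdLEquiv (ZMod 2) (Finsupp.single ((dEquiv σ) d) c)) := by
    rw [eAux, LinearEquiv.trans_apply, LinearEquiv.trans_apply, LinearEquiv.trans_apply]
    congr 2
    rw [← single_eq_monomial]
    exact Finsupp.domLCongr_single (dEquiv σ) d c
  have hp : (dEquiv σ) d = (dOdd σ d, dHalf σ d) := rfl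
  rw [h1, hp, prodLEquiv_single, Finsupp.mapRange.linearEquiv_apply, Finsupp.mapRange_single,
    AddMonoidAlgebra.coeffLinearEquiv_symm_apply, ← single_eq_monomial]
  rfl

lemma prodX_eq (T : Finset σ) :
    (∏ s ∈ T, (X s : MvPolynomial σ (ZMod 2))) = monomial (indT σ T) 1 := by
  classical
  induction T using Finset.induction with
  | empty => simp [indT]
  | @insert a s hs ih =>
    rw [Finset.prod_insert hs, ih,
      show (X a : MvPolynomial σ (ZMod 2)) = monomial (Finsupp.single a 1) 1 from rfl,
      monomial_mul, one_mul]
    unfold indT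
    rw [Finset.sum_insert hs]

lemma sq_char2 : ∀ c : ZMod 2, c * c = c := by decide

lemma sq_eq (d : σ →₀ ℕ) (c : ZMod 2) :
    (monomial d c : MvPolynomial σ (ZMod 2)) ^ 2 = monomial (d + d) c := by
  rw [sq, monomial_mul, sq_char2]

lemma addSq2 (p q : MvPolynomial σ (ZMod 2)) : (p + q) ^ 2 = p ^ 2 + q ^ 2 :=
  CharTwo.add_sq p q

lemma glue_eq (T : Finset σ) (h : σ →₀ ℕ) :
    indT σ T + (h + h) = (dEquiv σ).symm (T, h) := by
  ext s
  rw [dEquiv_symm_apply, Finsupp.add_apply, Finsupp.add_apply, indT_apply]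
  omega

lemma eAux_key (T : Finset σ) (g : MvPolynomial σ (ZMod 2)) :
    eAux σ ((∏ s ∈ T, X s) * g ^ 2) = Finsupp.single T g := by
  induction g using MvPolynomial.induction_on' with
  | monomial d c =>
    rw [prodX_eq, sq_eq, monomial_mul, one_mul, eAux_monomial]
    have hD : (dEquiv σ) (indT σ T + (d + d)) = (T, d) := by
      rw [glue_eq, Equiv.apply_symm_apply]
    have h1 : dOdd σ (indT σ T + (d + d)) = T := congrArg Prod.fst hD
    have h2 : dHalf σ (indT σ T + (d + d)) = d := congrArg Prod.snd hD
    rw [h1, h2]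
  | add p q hp hq =>
    rw [addSq2, mul_add, map_add, hp, hq, ← Finsupp.single_add]

lemma eAux_smul (g p : MvPolynomial σ (ZMod 2)) :
    eAux σ (g ^ 2 * p) = g • eAux σ p := by
  induction p using MvPolynomial.induction_on' with
  | monomial d c =>
    induction g using MvPolynomial.induction_on' with
    | monomial h c' =>
      rw [sq_eq, monomial_mul, eAux_monomial, eAux_monomial]
      have hD : dEquiv σ (h + h + d) = (dOdd σ d, h + dHalf σ d) := by
        have he : h + h + d = (dEquiv σ).symm (dOdd σ d, h + dHalf σ d) := by
          ext s
          rw [dEquiv_symm_apply, Finsupp.add_apply, Finsupp.add_apply, Finsupp.add_apply,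
            dHalf_apply]
          by_cases hs : d s % 2 = 1
          · rw [if_pos ((mem_dOdd σ d s).mpr hs)]; omega
          · rw [if_neg (fun hm => hs ((mem_dOdd σ d s).mp hm))]; omega
        rw [he, Equiv.apply_symm_apply]
      have h1 : dOdd σ (h + h + d) = dOdd σ d := congrArg Prod.fst hD
      have h2 : dHalf σ (h + h + d) = h + dHalf σ d := congrArg Prod.snd hD
      rw [h1, h2, Finsupp.smul_single, smul_eq_mul, monomial_mul]
    | add a b ha hb =>
      rw [addSq2, add_mul, map_add, ha, hb, add_smul]
  | add p q hp hq =>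
    rw [mul_add, map_add, hp, hq, map_add, smul_add]

lemma eAux_symm_single (T : Finset σ) (g : MvPolynomial σ (ZMod 2)) :
    (eAux σ).symm (Finsupp.single T g) = (∏ s ∈ T, X s) * g ^ 2 := by
  rw [← eAux_key σ T g, LinearEquiv.symm_apply_apply]

lemma card_dOdd_le (d : σ →₀ ℕ) : (dOdd σ d).card ≤ d.degree := by
  classical
  calc (dOdd σ d).card ≤ d.support.card := Finset.card_filter_le _ _
    _ = ∑ _s ∈ d.support, 1 := by simp
    _ ≤ ∑ s ∈ d.support, d s := Finset.sum_le_sum (fun s hs => by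
        simp only [Finsupp.mem_support_iff] at hs; omega)
    _ = d.degree := rfl

lemma glue_odd_half (d : σ →₀ ℕ) :
    indT σ (dOdd σ d) + (dHalf σ d + dHalf σ d) = d := by
  rw [glue_eq]
  exact Equiv.symm_apply_apply (dEquiv σ) d

lemma key_factor (d : σ →₀ ℕ) (c : ZMod 2) (g : MvPolynomial σ (ZMod 2)) :
    (∏ s ∈ dOdd σ d, X s) * ((monomial (dHalf σ d) c) * g) ^ 2
      = monomial d c * g ^ 2 := by
  rw [prodX_eq, mul_pow, sq_eq, ← mul_assoc, monomial_mul, one_mul, glue_odd_half]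

lemma prodX_hom (T : Finset σ) :
    (∏ s ∈ T, (X s : MvPolynomial σ (ZMod 2))).IsHomogeneous T.card := by
  simpa using MvPolynomial.IsHomogeneous.prod T (fun s => (X s : MvPolynomial σ (ZMod 2)))
    (fun _ => 1) (fun s _ => isHomogeneous_X _ s)

lemma frobFilt_eq (t : ℕ) : frobFilt σ t =
    (Finsupp.supported (MvPolynomial σ (ZMod 2)) (ZMod 2) {T : Finset σ | T.card ≤ t}).comap
      (eAux σ).toLinearMap := by
  apply le_antisymm
  · rw [frobFilt, Submodule.span_le]
    rintro p ⟨u, hu, m, g, hm, rfl⟩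
    simp only [SetLike.mem_coe, Submodule.mem_comap, LinearEquiv.coe_coe]
    have hrw : eAux σ (m * g ^ 2) = ∑ d ∈ m.support,
        Finsupp.single (dOdd σ d) ((monomial (dHalf σ d) (coeff d m)) * g) := by
      conv_lhs => rw [m.as_sum]
      rw [Finset.sum_mul, map_sum]
      exact Finset.sum_congr rfl (fun d hd => by rw [← key_factor, eAux_key])
    rw [hrw]
    apply Submodule.sum_mem
    intro d hd
    apply Finsupp.single_mem_supported
    show (dOdd σ d).card ≤ t
    have hdeg : d.degree = u := by
      have := hm (Finsupp.mem_support_iff.mp hd)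
      rw [Finsupp.degree_eq_weight_one (R := ℕ)]; exact this
    exact le_trans (hdeg ▸ card_dOdd_le σ d) hu
  · intro p hp
    simp only [Submodule.mem_comap, LinearEquiv.coe_coe, Finsupp.mem_supported] at hp
    have hq : p = (eAux σ).symm (eAux σ p) := (LinearEquiv.symm_apply_apply _ _).symm
    rw [hq, ← Finsupp.sum_single (eAux σ p), Finsupp.sum, map_sum]
    apply Submodule.sum_mem
    intro T hT
    rw [eAux_symm_single]
    apply Submodule.subset_span
    exact ⟨T.card, hp hT, ∏ s ∈ T, X s, (eAux σ p) T, prodX_hom σ T, rfl⟩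

lemma frobFiltPred_eq (t : ℕ) : frobFiltPred σ t =
    (Finsupp.supported (MvPolynomial σ (ZMod 2)) (ZMod 2) {T : Finset σ | T.card < t}).comap
      (eAux σ).toLinearMap := by
  cases t with
  | zero =>
    show (⊥ : Submodule (ZMod 2) (MvPolynomial σ (ZMod 2))) = _
    have h1 : {T : Finset σ | T.card < 0} = (∅ : Set (Finset σ)) := by
      ext T; simp
    rw [h1, Finsupp.supported_empty]
    apply le_antisymm (bot_le)
    intro p hp
    simp only [Submodule.mem_comap, LinearEquiv.coe_coe, Submodule.mem_bot] at hp
    have : p = 0 := by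
      apply (eAux σ).injective
      simp [hp]
    simp [this]
  | succ t =>
    show frobFilt σ t = _
    rw [frobFilt_eq]
    congr 1
    ext T
    simp [Nat.lt_succ_iff]

end Aux

/-- Over `𝔽₂`, for `W` of dimension `r`: the filtration quotients of the Frobenius filtration
are `f_t/f_{t-1} ≅ Λ^t(W) ⊗ S^*(W)` (modelled by finitely supported functions from
`t`-element subsets of a basis to polynomials), via `x_1⋯x_t·g² ↦ (x_1 ∧ ⋯ ∧ x_t) ⊗ g`;
moreover there is an isomorphism of `S^*(W)`-modules (acting through the Frobenius)
`⊕_t f_t/f_{t-1} ≅ S^*(W)`. -/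
theorem stmt13 (σ : Type) [Fintype σ] [DecidableEq σ] :
    (∀ t : ℕ, ∃ φ : MvPolynomial σ (ZMod 2) →ₗ[ZMod 2]
        ({T : Finset σ // T.card = t} →₀ MvPolynomial σ (ZMod 2)),
      (∀ (T : Finset σ) (hT : T.card = t) (g : MvPolynomial σ (ZMod 2)),
        φ ((∏ s ∈ T, X s) * g ^ 2) = Finsupp.single ⟨T, hT⟩ g) ∧
      Submodule.map φ (frobFilt σ t) = ⊤ ∧
      (∀ p ∈ frobFiltPred σ t, φ p = 0) ∧
      (∀ p ∈ frobFilt σ t, φ p = 0 → p ∈ frobFiltPred σ t)) ∧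
    (∃ e : MvPolynomial σ (ZMod 2) ≃ₗ[ZMod 2] (Finset σ →₀ MvPolynomial σ (ZMod 2)),
      (∀ (T : Finset σ) (g : MvPolynomial σ (ZMod 2)),
        e ((∏ s ∈ T, X s) * g ^ 2) = Finsupp.single T g) ∧
      (∀ g p : MvPolynomial σ (ZMod 2), e (g ^ 2 * p) = g • e p)) := by
  constructor
  · intro t
    set φ := (Finsupp.lcomapDomain (Subtype.val : {T : Finset σ // T.card = t} → Finset σ)
        Subtype.val_injective).comp (eAux σ).toLinearMap with hφdef
    have hφapp : ∀ (p : MvPolynomial σ (ZMod 2)) (U : {T : Finset σ // T.card = t}),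
        φ p U = eAux σ p U.1 := fun p U => rfl
    have hkey : ∀ (T : Finset σ) (hT : T.card = t) (g : MvPolynomial σ (ZMod 2)),
        φ ((∏ s ∈ T, X s) * g ^ 2) = Finsupp.single ⟨T, hT⟩ g := by
      intro T hT g
      apply Finsupp.ext
      intro U
      rw [hφapp, eAux_key]
      rcases eq_or_ne U ⟨T, hT⟩ with h | h
      · subst h; rw [Finsupp.single_eq_same, Finsupp.single_eq_same]
      · rw [Finsupp.single_eq_of_ne' (fun hc => h (Subtype.ext hc.symm)),
          Finsupp.single_eq_of_ne' (Ne.symm h)]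
    refine ⟨φ, hkey, ?_, ?_, ?_⟩
    · rw [eq_top_iff]
      intro x _
      induction x using Finsupp.induction_linear with
      | zero => exact Submodule.zero_mem _
      | add f g hf hg =>
        exact Submodule.add_mem _ (hf trivial) (hg trivial)
      | single U g =>
        refine ⟨(∏ s ∈ U.1, X s) * g ^ 2, ?_, ?_⟩
        · apply Submodule.subset_span
          exact ⟨U.1.card, le_of_eq U.2, ∏ s ∈ U.1, X s, g, prodX_hom σ U.1, rfl⟩
        · rw [hkey U.1 U.2 g]
    · intro p hp
      rw [frobFiltPred_eq] at hp
      simp only [Submodule.mem_comap, LinearEquiv.coe_coe, Finsupp.mem_supported] at hp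
      apply Finsupp.ext
      intro U
      rw [hφapp, Finsupp.coe_zero, Pi.zero_apply]
      by_contra hne
      have hmem : (U.1 : Finset σ) ∈ (eAux σ p).support := Finsupp.mem_support_iff.mpr hne
      have := hp hmem
      simp only [Set.mem_setOf_eq, U.2] at this
      omega
    · intro p hpf hp0
      rw [frobFiltPred_eq]
      rw [frobFilt_eq] at hpf
      simp only [Submodule.mem_comap, LinearEquiv.coe_coe, Finsupp.mem_supported] at hpf ⊢
      intro T hT
      have h1 : T.card ≤ t := hpf hT
      have h2 : T.card ≠ t := by
        intro hc
        have := DFunLike.congr_fun hp0 (⟨T, hc⟩ : {T : Finset σ // T.card = t})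
        rw [hφapp] at this
        simp only [Finsupp.coe_zero, Pi.zero_apply] at this
        exact Finsupp.mem_support_iff.mp hT this
      show T.card < t
      omega
  · exact ⟨eAux σ, eAux_key σ, eAux_smul σ⟩
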